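/- Let d be odd and let M be a subgroup of (ZMod d)^{2n} on which the symplectic form vanishes identically (M isotropic) with |M| = d^n. Then the operator P = d^{-n} Σ_{m∈M} χ([v,m]) w(m) is a projection (P² = P, P† = P) of rank one, for any v ∈ (ZMod d)^{2n}. -/

import Mathlib

open scoped BigOperators
open Finset Matrix
open scoped ComplexOrder

attribute [instance] Classical.propDecidable

/-- The character `χ(t) = exp(2πit/d)` on `ZMod d`. -/
noncomputable def chi (d : ℕ) (t : ZMod d) : ℂ :=
  Complex.exp (2 * Real.pi * Complex.I * (t.val : ℂ) / (d : ℂ))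

/-- The standard symplectic form on `(Fin n → R) × (Fin n → R)`. -/
def symp (R : Type) [CommRing R] (n : ℕ) (v w : (Fin n → R) × (Fin n → R)) : R :=
  (∑ i, v.1 i * w.2 i) - ∑ i, v.2 i * w.1 i

/-- Single-particle Weyl operator `w(p,q) = χ(-2⁻¹pq) ẑ(p) x̂(q)` on `ℂ^d`. -/
noncomputable def weyl1 (d : ℕ) (p q : ZMod d) : Matrix (ZMod d) (ZMod d) ℂ :=
  Matrix.of fun x y => chi d (-(2⁻¹ : ZMod d) * p * q + p * x) * (if y = x - q then 1 else 0)

/-- Multi-particle Weyl operator on `(ℂ^d)^{⊗n}` in coordinates. -/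
noncomputable def weyl (d n : ℕ) (p q : Fin n → ZMod d) :
    Matrix (Fin n → ZMod d) (Fin n → ZMod d) ℂ :=
  Matrix.of fun x y =>
    chi d (-(2⁻¹ : ZMod d) * (∑ i, p i * q i) + ∑ i, p i * x i) * (if y = x - q then 1 else 0)

/-- Weyl operator indexed by a phase space point. -/
noncomputable def weylV (d n : ℕ) (v : (Fin n → ZMod d) × (Fin n → ZMod d)) :
    Matrix (Fin n → ZMod d) (Fin n → ZMod d) ℂ :=
  weyl d n v.1 v.2

/-- Action of the Weyl operator on wave functions:
`(w(p,q)ψ)(y) = χ(-2⁻¹pq + py) ψ(y-q)`. -/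
noncomputable def weylAct (d n : ℕ) (p q : Fin n → ZMod d) (ψ : (Fin n → ZMod d) → ℂ) :
    (Fin n → ZMod d) → ℂ :=
  fun y => chi d (-(2⁻¹ : ZMod d) * (∑ i, p i * q i) + ∑ i, p i * y i) * ψ (y - q)

/-- Wigner function of a pure state `ψ`. -/
noncomputable def wignerPure (d n : ℕ) [NeZero d] (ψ : (Fin n → ZMod d) → ℂ)
    (p q : Fin n → ZMod d) : ℂ :=
  ((d : ℂ) ^ n)⁻¹ * ∑ ξ : Fin n → ZMod d, chi d (-(∑ i, ξ i * p i)) *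
    (starRingEnd ℂ) (ψ (q - (2⁻¹ : ZMod d) • ξ)) * ψ (q + (2⁻¹ : ZMod d) • ξ)

noncomputable def omg (d : ℕ) : ℂ := Complex.exp (2 * Real.pi * Complex.I / d)

lemma chi_eq_pow (d : ℕ) (t : ZMod d) : chi d t = omg d ^ t.val := by
  rw [chi, omg, ← Complex.exp_nat_mul]
  congr 1
  ring

lemma omg_pow_d (d : ℕ) [NeZero d] : omg d ^ d = 1 := by
  rw [omg, ← Complex.exp_nat_mul]
  rw [mul_div_cancel₀ _ (Nat.cast_ne_zero.mpr (NeZero.ne d))]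
  exact Complex.exp_two_pi_mul_I

lemma chi_zero (d : ℕ) [NeZero d] : chi d 0 = 1 := by
  rw [chi_eq_pow, ZMod.val_zero, pow_zero]

lemma chi_add (d : ℕ) [NeZero d] (a b : ZMod d) : chi d (a + b) = chi d a * chi d b := by
  rw [chi_eq_pow, chi_eq_pow, chi_eq_pow, ZMod.val_add, ← pow_eq_pow_mod _ (omg_pow_d d), pow_add]

lemma chi_ne_zero (d : ℕ) [NeZero d] (t : ZMod d) : chi d t ≠ 0 := by
  rw [chi]; exact Complex.exp_ne_zero _

lemma star_chi (d : ℕ) [NeZero d] (t : ZMod d) : star (chi d t) = chi d (-t) := by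
  have h1 : chi d t * chi d (-t) = 1 := by
    rw [← chi_add, add_neg_cancel, chi_zero]
  have h2 : chi d t * star (chi d t) = 1 := by
    rw [chi, Complex.star_def, ← Complex.exp_conj, ← Complex.exp_add]
    rw [show (starRingEnd ℂ) (2 * ↑Real.pi * Complex.I * (t.val : ℂ) / d)
        = -(2 * ↑Real.pi * Complex.I * (t.val : ℂ) / d) by
      simp only [map_div₀, _root_.map_mul, map_ofNat, Complex.conj_ofReal, Complex.conj_I,
        Complex.conj_natCast]
      ring]
    simp
  exact mul_left_cancel₀ (chi_ne_zero d t) (h2.trans h1.symm)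

lemma chi_eq_one_iff (d : ℕ) [NeZero d] {t : ZMod d} : chi d t = 1 ↔ t = 0 := by
  constructor
  · intro h
    rw [chi, Complex.exp_eq_one_iff] at h
    obtain ⟨k, hk⟩ := h
    have hd : (d : ℂ) ≠ 0 := Nat.cast_ne_zero.mpr (NeZero.ne d)
    have hI : (2 * (Real.pi:ℂ) * Complex.I) ≠ 0 := by
      simp [Complex.I_ne_zero, Real.pi_ne_zero]
    have hv : (t.val : ℂ) = (k : ℂ) * d := by
      have h3 : (2 * (Real.pi:ℂ) * Complex.I) * ((t.val : ℂ) / d) =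
          (2 * (Real.pi:ℂ) * Complex.I) * (k : ℂ) := by linear_combination hk
      have h4 := mul_left_cancel₀ hI h3
      rw [div_eq_iff hd] at h4
      exact h4
    have hvz : (t.val : ℤ) = k * d := by exact_mod_cast hv
    have hdvd : d ∣ t.val := by
      have : (d:ℤ) ∣ (t.val : ℤ) := ⟨k, by linarith [hvz]⟩
      exact_mod_cast this
    have := Nat.eq_zero_of_dvd_of_lt hdvd (ZMod.val_lt t)
    · exact (ZMod.val_eq_zero t).mp (by omega)
  · rintro rfl; exact chi_zero d

lemma gauss1 (d : ℕ) [NeZero d] {p : ZMod d} (hp : p ≠ 0) :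
    ∑ t : ZMod d, chi d (p * t) = 0 := by
  have key : ∑ t : ZMod d, chi d (p * t) = chi d p * ∑ t : ZMod d, chi d (p * t) := by
    rw [Finset.mul_sum]
    refine Fintype.sum_equiv (Equiv.subRight (1 : ZMod d)) _ _ (fun t => ?_)
    simp only [Equiv.subRight_apply]
    rw [← chi_add]
    congr 1
    ring
  have hne : chi d p ≠ 1 := fun h => hp ((chi_eq_one_iff d).mp h)
  have : (1 - chi d p) * ∑ t : ZMod d, chi d (p * t) = 0 := by
    rw [sub_mul, one_mul, ← key, sub_self]
  rcases mul_eq_zero.mp this with h | h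
  · exact absurd (by linear_combination -h : chi d p = 1) hne
  · exact h

lemma chi_sum (d : ℕ) [NeZero d] {ι : Type*} (s : Finset ι) (f : ι → ZMod d) :
    chi d (∑ i ∈ s, f i) = ∏ i ∈ s, chi d (f i) := by
  induction s using Finset.cons_induction with
  | empty => simp [chi_zero]
  | cons a s ha ih => rw [Finset.sum_cons, Finset.prod_cons, chi_add, ih]

lemma gaussn (d n : ℕ) [NeZero d] (p : Fin n → ZMod d) :
    ∑ x : Fin n → ZMod d, chi d (∑ i, p i * x i) = if p = 0 then (d:ℂ)^n else 0 := by
  have h1 : ∑ x : Fin n → ZMod d, chi d (∑ i, p i * x i)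
      = ∏ i, ∑ t : ZMod d, chi d (p i * t) := by
    rw [Finset.prod_univ_sum]
    rw [Fintype.piFinset_univ]
    exact Finset.sum_congr rfl fun x _ => chi_sum d univ _
  rw [h1]
  by_cases hp : p = 0
  · subst hp
    simp [chi_zero, Finset.card_univ, ZMod.card]
  · rw [if_neg hp]
    obtain ⟨i, hi⟩ := Function.ne_iff.mp hp
    exact Finset.prod_eq_zero (Finset.mem_univ i) (gauss1 d hi)

lemma symp_add_right (d n : ℕ) (v a b : (Fin n → ZMod d) × (Fin n → ZMod d)) :
    symp (ZMod d) n v (a + b) = symp (ZMod d) n v a + symp (ZMod d) n v b := by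
  simp only [symp, Prod.fst_add, Prod.snd_add, Pi.add_apply, mul_add, Finset.sum_add_distrib]
  ring

lemma symp_neg_right (d n : ℕ) (v a : (Fin n → ZMod d) × (Fin n → ZMod d)) :
    symp (ZMod d) n v (-a) = - symp (ZMod d) n v a := by
  simp only [symp, Prod.fst_neg, Prod.snd_neg, Pi.neg_apply, mul_neg, Finset.sum_neg_distrib]
  ring

lemma symp_zero_right (d n : ℕ) (v : (Fin n → ZMod d) × (Fin n → ZMod d)) :
    symp (ZMod d) n v 0 = 0 := by
  simp [symp]

lemma two_inv_mul_two (d : ℕ) (hd : Odd d) : (2⁻¹ : ZMod d) * 2 = 1 := by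
  apply ZMod.inv_mul_of_unit
  rw [show (2 : ZMod d) = ((2 : ℕ) : ZMod d) by norm_num]
  rw [ZMod.isUnit_iff_coprime]
  exact Nat.coprime_two_left.mpr hd

lemma weylV_mul (d n : ℕ) [NeZero d] (hd : Odd d)
    (a b : (Fin n → ZMod d) × (Fin n → ZMod d)) :
    weylV d n a * weylV d n b =
      chi d ((2⁻¹ : ZMod d) * symp (ZMod d) n a b) • weylV d n (a + b) := by
  obtain ⟨p, q⟩ := a; obtain ⟨p', q'⟩ := b
  have h2 := two_inv_mul_two d hd
  ext x z
  rw [Matrix.mul_apply, Finset.sum_eq_single (x - q)]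
  · simp only [weylV, weyl, symp, of_apply, Matrix.smul_apply, smul_eq_mul, Prod.fst_add,
      Prod.snd_add, eq_self_iff_true, if_true, mul_one]
    by_cases hz : z = x - q - q'
    · have hz' : z = x - (q + q') := by rw [hz, sub_sub]
      rw [if_pos hz, if_pos hz', mul_one, mul_one, ← chi_add, ← chi_add]
      congr 1
      have hqp : ∑ i, q i * p' i = ∑ i, p' i * q i :=
        Finset.sum_congr rfl fun i _ => mul_comm _ _
      simp only [Pi.add_apply, Pi.sub_apply, mul_add, add_mul, mul_sub,
        Finset.sum_add_distrib, Finset.sum_sub_distrib, hqp]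
      linear_combination (∑ i, p' i * q i) * h2
    · have hz' : ¬ z = x - (q + q') := by rwa [← sub_sub]
      rw [if_neg hz, if_neg hz']
      simp
  · intro y _ hy
    simp only [weylV, weyl, of_apply, if_neg hy, mul_zero, zero_mul]
  · intro h; exact absurd (Finset.mem_univ _) h

lemma weylV_conjTranspose (d n : ℕ) [NeZero d] (hd : Odd d)
    (a : (Fin n → ZMod d) × (Fin n → ZMod d)) :
    (weylV d n a)ᴴ = weylV d n (-a) := by
  obtain ⟨p, q⟩ := a
  have h2 := two_inv_mul_two d hd
  ext x y
  simp only [weylV, weyl, conjTranspose_apply, of_apply, Prod.fst_neg, Prod.snd_neg,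
    Pi.neg_apply, star_mul', apply_ite (star : ℂ → ℂ), star_one, star_zero]
  rw [star_chi]
  by_cases h : x = y - q
  · have hy : y = x - -q := by rw [h]; abel
    rw [if_pos h, if_pos hy, mul_one, mul_one]
    congr 1
    have hy2 : y = x + q := by rw [h]; abel
    subst hy2
    simp only [Pi.add_apply, mul_add, mul_neg, neg_mul, neg_add, neg_neg,
      Finset.sum_add_distrib, Finset.sum_neg_distrib]
    linear_combination (∑ i, p i * q i) * h2
  · rw [if_neg h, if_neg, mul_zero, mul_zero]
    intro hy
    apply h
    rw [hy]
    abel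

lemma trace_weylV (d n : ℕ) [NeZero d] (a : (Fin n → ZMod d) × (Fin n → ZMod d)) :
    (weylV d n a).trace = if a = 0 then (d:ℂ)^n else 0 := by
  obtain ⟨p, q⟩ := a
  rw [Matrix.trace]
  by_cases hq : q = 0
  · subst hq
    have hterm : ∀ x, (weylV d n (p, 0)).diag x = chi d (∑ i, p i * x i) := by
      intro x
      simp [weylV, weyl, Matrix.diag]
    rw [Finset.sum_congr rfl fun x _ => hterm x, gaussn]
    by_cases hp : p = 0
    · rw [if_pos hp, if_pos (by simp [hp, Prod.ext_iff])]
    · rw [if_neg hp, if_neg (by simp [Prod.ext_iff, hp])]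
  · rw [if_neg (by simp [Prod.ext_iff, hq])]
    apply Finset.sum_eq_zero
    intro x _
    simp only [weylV, weyl, diag_apply, of_apply]
    rw [if_neg, mul_zero]
    intro hx
    exact hq (sub_eq_self.mp hx.symm)

/-- For a maximally isotropic subgroup `M` of `(ZMod d)^{2n}` and any phase
space point `v`, the operator `P = d^{-n} Σ_{m∈M} χ([v,m]) w(m)` is a rank-one
orthogonal projection. -/
theorem stab_projector (d n : ℕ) [NeZero d] (hd : Odd d)
    (M : AddSubgroup ((Fin n → ZMod d) × (Fin n → ZMod d)))
    (hiso : ∀ m₁ ∈ M, ∀ m₂ ∈ M, symp (ZMod d) n m₁ m₂ = 0)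
    (hcard : Nat.card M = d ^ n)
    (v : (Fin n → ZMod d) × (Fin n → ZMod d)) :
    ∀ P : Matrix (Fin n → ZMod d) (Fin n → ZMod d) ℂ,
      P = ((d : ℂ) ^ n)⁻¹ • ∑ m : M, chi d (symp (ZMod d) n v m) • weylV d n (m : _) →
      P * P = P ∧ Pᴴ = P ∧ P.rank = 1 := by
  intro P hP
  have hdC : ((d:ℂ)^n) ≠ 0 := pow_ne_zero _ (Nat.cast_ne_zero.mpr (NeZero.ne d))
  set S : Matrix (Fin n → ZMod d) (Fin n → ZMod d) ℂ :=
    ∑ m : M, chi d (symp (ZMod d) n v m) • weylV d n (m : _) with hS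
  -- multiplication of two terms
  have hWW : ∀ a b : M, weylV d n (a : _) * weylV d n (b : _) = weylV d n ((a : _) + (b : _)) := by
    intro a b
    rw [weylV_mul d n hd, hiso _ a.2 _ b.2, mul_zero, chi_zero, one_smul]
  -- S * S = d^n • S
  have hSS : S * S = (d ^ n : ℕ) • S := by
    rw [hS, Finset.sum_mul]
    have hrow : ∀ a : M,
        (chi d (symp (ZMod d) n v a) • weylV d n (a : _)) * S = S := by
      intro a
      rw [Matrix.smul_mul, hS, Finset.mul_sum]
      have hterm : ∀ b : M, weylV d n (a : _) * (chi d (symp (ZMod d) n v b) • weylV d n (b : _))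
          = chi d (symp (ZMod d) n v b) • weylV d n ((a : _) + (b : _)) := by
        intro b
        rw [Matrix.mul_smul, hWW]
      rw [Finset.sum_congr rfl fun b _ => hterm b, Finset.smul_sum]
      have hcomb : ∀ b : M,
          chi d (symp (ZMod d) n v a) • chi d (symp (ZMod d) n v b) • weylV d n ((a : _) + (b : _))
          = chi d (symp (ZMod d) n v ((a + b : M) : _)) • weylV d n ((a + b : M) : _) := by
        intro b
        rw [smul_smul, ← chi_add, ← symp_add_right]
        rfl
      rw [Finset.sum_congr rfl fun b _ => hcomb b]
      exact Fintype.sum_equiv (Equiv.addLeft a) _ _ (fun b => rfl)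
    rw [Finset.sum_congr rfl fun a _ => hrow a, Finset.sum_const, Finset.card_univ,
      ← Nat.card_eq_fintype_card, hcard]
  have hmul : P * P = P := by
    rw [hP, Matrix.smul_mul, Matrix.mul_smul, hSS, ← Nat.cast_smul_eq_nsmul ℂ,
      smul_smul, smul_smul]
    congr 1
    push_cast
    field_simp
  -- Hermitian
  have hherm : Pᴴ = P := by
    rw [hP, Matrix.conjTranspose_smul, hS, Matrix.conjTranspose_sum]
    have hterm : ∀ m : M, (chi d (symp (ZMod d) n v m) • weylV d n (m : _))ᴴ
        = chi d (symp (ZMod d) n v ((-m : M) : _)) • weylV d n ((-m : M) : _) := by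
      intro m
      rw [Matrix.conjTranspose_smul, weylV_conjTranspose d n hd]
      rw [show ((-m : M) : _) = -(m : (Fin n → ZMod d) × (Fin n → ZMod d)) from rfl]
      rw [symp_neg_right, ← star_chi]
    rw [Finset.sum_congr rfl fun m _ => hterm m]
    have hre : (∑ m : M, chi d (symp (ZMod d) n v ((-m : M) : _)) • weylV d n ((-m : M) : _))
        = ∑ m : M, chi d (symp (ZMod d) n v (m : _)) • weylV d n (m : _) :=
      Fintype.sum_equiv (Equiv.neg M) _ _ (fun m => rfl)
    rw [hre]
    congr 1
    simp [starRingEnd_apply, star_inv₀, star_pow]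
  -- trace of P is 1
  have htr : P.trace = 1 := by
    rw [hP, Matrix.trace_smul, hS, Matrix.trace_sum]
    have hterm : ∀ m : M, (chi d (symp (ZMod d) n v m) • weylV d n (m : _)).trace
        = if m = 0 then (d:ℂ)^n else 0 := by
      intro m
      rw [Matrix.trace_smul, trace_weylV, smul_eq_mul, mul_ite, mul_zero]
      by_cases hm : m = 0
      · rw [if_pos hm, if_pos (ZeroMemClass.coe_eq_zero.mpr hm), hm]
        rw [show ((0 : M) : (Fin n → ZMod d) × (Fin n → ZMod d)) = 0 from rfl,
          symp_zero_right, chi_zero, one_mul]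
      · rw [if_neg hm, if_neg (fun h => hm (ZeroMemClass.coe_eq_zero.mp h))]
    rw [Finset.sum_congr rfl fun m _ => hterm m, Finset.sum_ite_eq' univ (0 : M)]
    rw [if_pos (Finset.mem_univ _), smul_eq_mul, inv_mul_cancel₀ hdC]
  -- rank
  have hhermP : P.IsHermitian := hherm
  have heig : ∀ i, hhermP.eigenvalues i = 0 ∨ hhermP.eigenvalues i = 1 := by
    intro i
    have hv := hhermP.mulVec_eigenvectorBasis i
    have hv0 : ⇑(hhermP.eigenvectorBasis i) ≠ 0 :=
      fun h => hhermP.eigenvectorBasis.orthonormal.ne_zero i (WithLp.ofLp_injective 2 (by rw [h]; rfl))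
    have h1 : P *ᵥ (P *ᵥ ⇑(hhermP.eigenvectorBasis i)) = P *ᵥ ⇑(hhermP.eigenvectorBasis i) := by
      rw [Matrix.mulVec_mulVec, hmul]
    rw [hv, Matrix.mulVec_smul, hv, smul_smul] at h1
    have h2 : (hhermP.eigenvalues i * hhermP.eigenvalues i - hhermP.eigenvalues i)
        • ⇑(hhermP.eigenvectorBasis i) = 0 := by
      rw [sub_smul, h1, sub_self]
    rcases smul_eq_zero.mp h2 with h | h
    · have h3 : hhermP.eigenvalues i * (hhermP.eigenvalues i - 1) = 0 := by ring_nf; linarith [h]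
      rcases mul_eq_zero.mp h3 with h4 | h4
      · exact Or.inl h4
      · exact Or.inr (by linarith [sub_eq_zero.mp h4])
    · exact absurd h hv0
  have htrsum : ∑ i, hhermP.eigenvalues i = 1 := by
    have h : P.trace = ∑ i, (hhermP.eigenvalues i : ℂ) := by
      nth_rewrite 1 [hhermP.spectral_theorem]
      rw [Unitary.conjStarAlgAut_apply]
      rw [Matrix.trace_mul_comm, ← Matrix.mul_assoc, Unitary.coe_star_mul_self, one_mul,
        Matrix.trace_diagonal]
      rfl
    rw [htr] at h
    have := h.symm
    exact_mod_cast this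
  have hrank : P.rank = 1 := by
    rw [hhermP.rank_eq_card_non_zero_eigs, Fintype.card_subtype]
    have hsum : ∑ i, hhermP.eigenvalues i
        = (Finset.filter (fun i => hhermP.eigenvalues i ≠ 0) Finset.univ).card := by
      rw [← Finset.sum_filter_ne_zero]
      rw [Finset.sum_congr rfl (fun i hi => ?_), Finset.sum_const, nsmul_eq_mul, mul_one]
      rcases heig i with h | h
      · exact absurd h (Finset.mem_filter.mp hi).2
      · exact h
    rw [htrsum] at hsum
    exact_mod_cast hsum.symm
  exact ⟨hmul, hherm, hrank⟩
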